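/- arXiv:1010.4643 — 2 statements merged into one kernel-verified Lean document; each statement's English description precedes it below -/
import Mathlib

section
/- The Thue-Morse sequence is cube-free in the strong sense: if w = w₁…w_n is a nonempty word, then the word w w w₁ does not occur as a factor of the Thue-Morse fixed point ρ₀. -/
open Filter Topology MeasureTheory

/-- The left shift on the full 2-shift `Σ = {0,1}^ℕ`. -/
def shift (x : ℕ → Bool) : ℕ → Bool := fun n => x (n + 1)

/-- The Thue–Morse substitution `H : 0 → 01, 1 → 10`, acting on sequences. -/
def subH (x : ℕ → Bool) : ℕ → Bool :=
  fun n => if n % 2 = 0 then x (n / 2) else !x (n / 2)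

/-- The Thue–Morse sequence: `tm n` is the parity of the number of 1s in
the binary expansion of `n`. -/
def tm (n : ℕ) : Bool := (Nat.digits 2 n).count 1 % 2 == 1

/-- The fixed point of `subH` starting with 0. -/
def rho0 : ℕ → Bool := tm

/-- The fixed point of `subH` starting with 1. -/
def rho1 : ℕ → Bool := fun n => !tm n

/-- `rhoB b` is the fixed point of `subH` starting with digit `b`. -/
def rhoB : Bool → ℕ → Bool
  | false => rho0
  | true => rho1

/-- The digit-flipping involution. -/
def flipSeq (x : ℕ → Bool) : ℕ → Bool := fun n => !x n

/-- Prepend a digit to a sequence. -/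
def consTM (a : Bool) (x : ℕ → Bool) : ℕ → Bool
  | 0 => a
  | n + 1 => x n

/-- The Thue–Morse subshift: the closure of the shift orbit of `rho0`. -/
def TMK : Set (ℕ → Bool) := closure {y | ∃ n, y = shift^[n] rho0}

/-- The renormalization operator `𝓡V = V ∘ σ ∘ H + V ∘ H`. -/
def RenOp (V : (ℕ → Bool) → ℝ) : (ℕ → Bool) → ℝ :=
  fun x => V (shift (subH x)) + V (subH x)

/-- The Birkhoff sum `S_k V = ∑_{i<k} V ∘ σⁱ`. -/
def birkhoff (V : (ℕ → Bool) → ℝ) (k : ℕ) (x : ℕ → Bool) : ℝ :=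
  ∑ i ∈ Finset.range k, V (shift^[i] x)

/-- The potential `U_c`: value `c` on `[01]`, `-c` on `[10]`, `0` on `[00] ∪ [11]`. -/
def Upot (c : ℝ) (x : ℕ → Bool) : ℝ :=
  if x 0 = false ∧ x 1 = true then c
  else if x 0 = true ∧ x 1 = false then -c else 0

/-- The sliding block code `π(x)_k = 1` iff `x_k ≠ x_{k+1}`. -/
def piTM (x : ℕ → Bool) : ℕ → Bool := fun n => x n != x (n + 1)

/-- The Feigenbaum substitution `0 → 11, 1 → 10`, acting on sequences. -/
def subHfeig (x : ℕ → Bool) : ℕ → Bool :=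
  fun n => if n % 2 = 0 then true else !x (n / 2)

lemma tm_two_mul (a : ℕ) : tm (2 * a) = tm a := by
  rcases Nat.eq_zero_or_pos a with rfl | ha
  · rfl
  · unfold tm
    rw [Nat.digits_def' (by norm_num) (by omega)]
    simp [Nat.mul_div_cancel_left, Nat.mul_mod_right, List.count_cons]

lemma tm_two_mul_add_one (a : ℕ) : tm (2 * a + 1) = !tm a := by
  unfold tm
  rw [Nat.digits_def' (by norm_num) (by omega)]
  have h1 : (2 * a + 1) % 2 = 1 := by omega
  have h2 : (2 * a + 1) / 2 = a := by omega
  rw [h1, h2, List.count_cons]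
  rcases Nat.mod_two_eq_zero_or_one ((Nat.digits 2 a).count 1) with h | h <;>
    simp [Nat.add_mod, h]

lemma tm_eval (n : ℕ) : tm n = if n % 2 = 0 then tm (n / 2) else !tm (n / 2) := by
  rcases Nat.even_or_odd n with ⟨a, ha⟩ | ⟨a, ha⟩
  · have : n = 2 * a := by omega
    subst this
    simp [tm_two_mul, Nat.mul_mod_right, Nat.mul_div_cancel_left]
  · subst ha
    have h1 : (2 * a + 1) % 2 = 1 := by omega
    have h2 : (2 * a + 1) / 2 = a := by omega
    simp [tm_two_mul_add_one, h1, h2]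

lemma no_three (b : ℕ) : ¬ (tm b = tm (b + 1) ∧ tm (b + 1) = tm (b + 2)) := by
  rintro ⟨h1, h2⟩
  rcases Nat.even_or_odd b with ⟨c, hc⟩ | ⟨c, hc⟩
  · have e : b = 2 * c := by omega
    rw [e, show 2 * c + 1 = 2 * c + 1 from rfl, tm_two_mul, tm_two_mul_add_one] at h1
    simp at h1
  · have e1 : b + 1 = 2 * (c + 1) := by omega
    have e2 : b + 2 = 2 * (c + 1) + 1 := by omega
    rw [e1, e2, tm_two_mul, tm_two_mul_add_one] at h2
    simp at h2

lemma no_overlap : ∀ n, 1 ≤ n → ∀ k, ¬ (∀ i ≤ n, tm (k + i) = tm (k + n + i)) := by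
  intro n
  induction n using Nat.strong_induction_on with
  | _ n ih =>
    intro hn k h
    rcases Nat.even_or_odd n with ⟨m, hm⟩ | ⟨m, hm⟩
    · -- n = 2m even
      have hn2 : n = 2 * m := by omega
      have hm1 : 1 ≤ m := by omega
      rcases Nat.even_or_odd k with ⟨a, ha⟩ | ⟨a, ha⟩
      · -- k = 2a
        refine ih m (by omega) hm1 a (fun j hj => ?_)
        have hh := h (2 * j) (by omega)
        have e1 : k + 2 * j = 2 * (a + j) := by omega
        have e2 : k + n + 2 * j = 2 * (a + m + j) := by omega
        rw [e1, e2, tm_two_mul, tm_two_mul] at hh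
        exact hh
      · -- k = 2a + 1
        refine ih m (by omega) hm1 a (fun j hj => ?_)
        rcases Nat.eq_zero_or_pos j with rfl | hj1
        · have hh := h 0 (by omega)
          have e1 : k + 0 = 2 * a + 1 := by omega
          have e2 : k + n + 0 = 2 * (a + m) + 1 := by omega
          rw [e1, e2, tm_two_mul_add_one, tm_two_mul_add_one] at hh
          simpa using hh
        · have hh := h (2 * j - 1) (by omega)
          have e1 : k + (2 * j - 1) = 2 * (a + j) := by omega
          have e2 : k + n + (2 * j - 1) = 2 * (a + m + j) := by omega
          rw [e1, e2, tm_two_mul, tm_two_mul] at hh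
          exact hh
    · -- n = 2m + 1 odd
      have hn2 : n = 2 * m + 1 := by omega
      rcases Nat.eq_zero_or_pos m with rfl | hm1
      · -- n = 1
        have h0 := h 0 (by omega)
        have h1 := h 1 (by omega)
        exact no_three k ⟨by simpa [hn2] using h0, by
          have : k + 1 + 1 = k + 2 := by omega
          simpa [hn2, this] using h1⟩
      · -- n odd ≥ 3
        -- key: for even 2a with k ≤ 2a and 2a+1 ≤ k+n, tm (a+m) = tm (a+m+1)
        have key : ∀ a, k ≤ 2 * a → 2 * a + 1 ≤ k + n → tm (a + m) = tm (a + m + 1) := by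
          intro a ha1 ha2
          have g1 := h (2 * a - k) (by omega)
          have g2 := h (2 * a + 1 - k) (by omega)
          have e1 : k + (2 * a - k) = 2 * a := by omega
          have e2 : k + n + (2 * a - k) = 2 * (a + m) + 1 := by omega
          have e3 : k + (2 * a + 1 - k) = 2 * a + 1 := by omega
          have e4 : k + n + (2 * a + 1 - k) = 2 * (a + m + 1) := by omega
          rw [e1, e2, tm_two_mul, tm_two_mul_add_one] at g1
          rw [e3, e4, tm_two_mul_add_one, tm_two_mul] at g2
          -- g1 : tm a = !tm (a+m), g2 : !tm a = tm (a+m+1)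
          rw [g1] at g2
          simpa using g2
        rcases Nat.even_or_odd k with ⟨c, hc⟩ | ⟨c, hc⟩
        · -- k = 2c even : use a = c and a = c+1
          have k1 := key c (by omega) (by omega)
          have k2 := key (c + 1) (by omega) (by omega)
          exact no_three (c + m) ⟨k1, by
            have : c + 1 + m = c + m + 1 := by omega
            rw [this] at k2
            have : c + m + 1 + 1 = c + m + 2 := by omega
            rw [this] at k2
            exact k2⟩
        · -- k = 2c + 1 odd
          rcases Nat.lt_or_ge m 2 with hm2 | hm2
          · -- m = 1, n = 3, direct computation
            have hm' : m = 1 := by omega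
            subst hm'
            have g1 := h 1 (by omega)
            have g2 := h 2 (by omega)
            have g3 := h 3 (by omega)
            have e1 : k + 1 = 2 * (c + 1) := by omega
            have e2 : k + n + 1 = 2 * (c + 2) + 1 := by omega
            have e3 : k + 2 = 2 * (c + 1) + 1 := by omega
            have e4 : k + n + 2 = 2 * (c + 3) := by omega
            have e5 : k + 3 = 2 * (c + 2) := by omega
            have e6 : k + n + 3 = 2 * (c + 3) + 1 := by omega
            rw [e1, e2, tm_two_mul, tm_two_mul_add_one] at g1
            rw [e3, e4, tm_two_mul_add_one, tm_two_mul] at g2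
            rw [e5, e6, tm_two_mul, tm_two_mul_add_one] at g3
            cases hb1 : tm (c + 1) <;> cases hb2 : tm (c + 2) <;>
              cases hb3 : tm (c + 3) <;> simp_all
          · -- m ≥ 2 : use a = c+1 and a = c+2
            have k1 := key (c + 1) (by omega) (by omega)
            have k2 := key (c + 2) (by omega) (by omega)
            refine no_three (c + 1 + m) ⟨k1, ?_⟩
            have e : c + 2 + m = c + 1 + m + 1 := by omega
            rw [e] at k2
            have e2 : c + 1 + m + 1 + 1 = c + 1 + m + 2 := by omega
            rw [e2] at k2
            exact k2

lemma getD_period (w : List Bool) (hw : w ≠ []) (i : ℕ) (hi : i ≤ w.length) :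
    (w ++ w ++ w.take 1).getD i false = (w ++ w ++ w.take 1).getD (w.length + i) false := by
  have hl : 1 ≤ w.length := List.length_pos_iff.mpr hw
  rw [List.append_assoc]
  rcases Nat.lt_or_ge i w.length with h1 | h1
  · have L : (w ++ (w ++ w.take 1)).getD i false = w.getD i false :=
      List.getD_append _ _ _ _ h1
    have R : (w ++ (w ++ w.take 1)).getD (w.length + i) false = w.getD i false := by
      rw [List.getD_append_right _ _ _ _ (by omega)]
      have e : w.length + i - w.length = i := by omega
      rw [e, List.getD_append _ _ _ _ h1]
    rw [L, R]
  · have hi' : i = w.length := by omega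
    subst hi'
    have L : (w ++ (w ++ w.take 1)).getD w.length false = w.getD 0 false := by
      rw [List.getD_append_right _ _ _ _ (le_refl _), Nat.sub_self,
        List.getD_append _ _ _ _ (by omega)]
    have R : (w ++ (w ++ w.take 1)).getD (w.length + w.length) false
        = (w.take 1).getD 0 false := by
      rw [List.getD_append_right _ _ _ _ (by omega)]
      have e : w.length + w.length - w.length = w.length := by omega
      rw [e, List.getD_append_right _ _ _ _ (le_refl _), Nat.sub_self]
    rw [L, R]
    cases w with
    | nil => simp at hw
    | cons a t => simp [List.getD]

/-- the Thue–Morse sequence is strongly cube-free: for a nonempty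
word `w`, the word `w w w₁` never occurs as a factor of `ρ₀`. -/
theorem stmt4 (w : List Bool) (hw : w ≠ []) (k : ℕ) :
    ¬ (∀ i < 2 * w.length + 1, rho0 (k + i) = (w ++ w ++ w.take 1).getD i false) := by
  intro h
  have hl : 1 ≤ w.length := List.length_pos_iff.mpr hw
  refine no_overlap w.length hl k (fun i hi => ?_)
  have h1 := h i (by omega)
  have h2 := h (w.length + i) (by omega)
  have e : k + w.length + i = k + (w.length + i) := by omega
  rw [e]
  exact h1.trans ((getD_period w hw i hi).trans h2.symm)
end

section
/- The Thue-Morse subshift 𝕂 decomposes as the disjoint union 𝕂 = ⊔_{j=0}^{2ᵏ-1} σʲ(Hᵏ(𝕂)) for every k ≥ 1; in particular 𝕂 = H(𝕂) ⊔ σ(H(𝕂)). -/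
open Filter Topology MeasureTheory

lemma shift_iter_apply (n i : ℕ) (x : ℕ → Bool) : shift^[n] x i = x (n + i) := by
  induction n generalizing x with
  | zero => simp
  | succ m ih =>
    rw [Function.iterate_succ_apply, ih]
    simp [shift]; ring_nf

lemma subH_even (x : ℕ → Bool) (m : ℕ) : subH x (2 * m) = x m := by
  simp [subH, Nat.mul_div_cancel_left, Nat.mul_mod_right]

lemma subH_odd (x : ℕ → Bool) (m : ℕ) : subH x (2 * m + 1) = !x m := by
  have h1 : (2 * m + 1) % 2 = 1 := by omega
  have h2 : (2 * m + 1) / 2 = m := by omega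
  simp [subH, h1, h2]

lemma subH_shift (x : ℕ → Bool) : subH (shift x) = shift^[2] (subH x) := by
  funext n
  have h1 : (n + 2) % 2 = n % 2 := by omega
  have h2 : (n + 2) / 2 = n / 2 + 1 := by omega
  simp [subH, shift, shift_iter_apply, h1, h2, Nat.add_comm]

lemma subH_shift_iter (m : ℕ) (x : ℕ → Bool) :
    subH (shift^[m] x) = shift^[2 * m] (subH x) := by
  induction m with
  | zero => simp
  | succ p ih =>
    rw [Function.iterate_succ_apply', subH_shift, ih]
    rw [← Function.iterate_add_apply]
    congr 1; ring

lemma subHk_shift_iter (k m : ℕ) (x : ℕ → Bool) :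
    subH^[k] (shift^[m] x) = shift^[2 ^ k * m] (subH^[k] x) := by
  induction k generalizing x with
  | zero => simp
  | succ p ih =>
    rw [Function.iterate_succ_apply', ih, subH_shift_iter, Function.iterate_succ_apply']
    congr 1; ring

lemma tm_even (n : ℕ) : tm (2 * n) = tm n := by
  rcases Nat.eq_zero_or_pos n with h | h
  · simp [h]
  · unfold tm
    rw [Nat.digits_def' (by norm_num : 1 < 2) (by omega)]
    have h1 : 2 * n % 2 = 0 := by omega
    have h2 : 2 * n / 2 = n := by omega
    simp [h1, h2, List.count_cons]

lemma tm_odd (n : ℕ) : tm (2 * n + 1) = !tm n := by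
  unfold tm
  rw [Nat.digits_def' (by norm_num : 1 < 2) (by omega)]
  have h1 : (2 * n + 1) % 2 = 1 := by omega
  have h2 : (2 * n + 1) / 2 = n := by omega
  rw [h1, h2]
  have h3 : (1 :: Nat.digits 2 n).count 1 = (Nat.digits 2 n).count 1 + 1 := by
    simp [List.count_cons]
  rw [h3]
  rcases Nat.even_or_odd ((Nat.digits 2 n).count 1) with ⟨c, hc⟩ | ⟨c, hc⟩ <;>
  · rw [hc]
    have e1 : (c + c + 1) % 2 = 1 := by omega
    have e2 : (c + c) % 2 = 0 := by omega
    have e3 : (2 * c + 1 + 1) % 2 = 0 := by omega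
    have e4 : (2 * c + 1) % 2 = 1 := by omega
    simp [e1, e2, e3, e4]

lemma subH_rho0 : subH rho0 = rho0 := by
  funext n
  rcases Nat.even_or_odd n with ⟨m, hm⟩ | ⟨m, hm⟩
  · subst hm
    rw [show m + m = 2 * m by ring, subH_even]
    exact (tm_even m).symm
  · subst hm
    rw [subH_odd]
    exact (tm_odd m).symm

lemma continuous_shift : Continuous shift := by
  unfold shift
  exact continuous_pi fun n => continuous_apply (n + 1)

lemma continuous_subH : Continuous subH := by
  unfold subH
  refine continuous_pi fun n => ?_
  split
  · exact continuous_apply _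
  · exact (continuous_of_discreteTopology (f := Bool.not)).comp (continuous_apply _)

lemma rho0_mem_TMK : rho0 ∈ TMK := subset_closure ⟨0, rfl⟩

lemma shift_mem_TMK {x : ℕ → Bool} (hx : x ∈ TMK) : shift x ∈ TMK := by
  have h : shift '' {y | ∃ n, y = shift^[n] rho0} ⊆ {y | ∃ n, y = shift^[n] rho0} := by
    rintro _ ⟨y, ⟨n, rfl⟩, rfl⟩
    exact ⟨n + 1, (Function.iterate_succ_apply' shift n rho0).symm⟩
  have := (image_closure_subset_closure_image continuous_shift).trans (closure_mono h)
  exact this ⟨x, hx, rfl⟩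

lemma subH_mem_TMK {x : ℕ → Bool} (hx : x ∈ TMK) : subH x ∈ TMK := by
  have h : subH '' {y | ∃ n, y = shift^[n] rho0} ⊆ {y | ∃ n, y = shift^[n] rho0} := by
    rintro _ ⟨y, ⟨n, rfl⟩, rfl⟩
    exact ⟨2 * n, by rw [subH_shift_iter, subH_rho0]⟩
  have := (image_closure_subset_closure_image continuous_subH).trans (closure_mono h)
  exact this ⟨x, hx, rfl⟩

lemma shift_iter_mem_TMK {x : ℕ → Bool} (hx : x ∈ TMK) (n : ℕ) : shift^[n] x ∈ TMK := by
  induction n with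
  | zero => simpa
  | succ m ih => rw [Function.iterate_succ_apply']; exact shift_mem_TMK ih

lemma subH_iter_mem_TMK {x : ℕ → Bool} (hx : x ∈ TMK) (k : ℕ) : subH^[k] x ∈ TMK := by
  induction k with
  | zero => simpa
  | succ m ih => rw [Function.iterate_succ_apply']; exact subH_mem_TMK ih

lemma factor_lemma {x : ℕ → Bool} (hx : x ∈ TMK) (N : ℕ) :
    ∃ n, ∀ i < N, x i = tm (n + i) := by
  have hopen : IsOpen {y : ℕ → Bool | ∀ i ∈ Finset.range N, y i = x i} := by
    have : {y : ℕ → Bool | ∀ i ∈ Finset.range N, y i = x i} =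
        ⋂ i ∈ Finset.range N, (fun y : ℕ → Bool => y i) ⁻¹' {x i} := by
      ext y; simp
    rw [this]
    exact isOpen_biInter_finset fun i _ => (continuous_apply i).isOpen_preimage _ trivial
  have hmem : x ∈ {y : ℕ → Bool | ∀ i ∈ Finset.range N, y i = x i} := fun i _ => rfl
  obtain ⟨y, hy1, n, rfl⟩ :=
    mem_closure_iff.mp hx _ hopen hmem
  refine ⟨n, fun i hi => ?_⟩
  have := hy1 i (Finset.mem_range.mpr hi)
  rw [← this, shift_iter_apply]
  rfl

lemma tm_no_triple (m : ℕ) : ¬ (tm m = tm (m + 1) ∧ tm (m + 1) = tm (m + 2)) := by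
  rcases Nat.even_or_odd m with ⟨j, hj⟩ | ⟨j, hj⟩
  · have e1 : m = 2 * j := by omega
    subst e1
    rw [show 2 * j + 1 = 2 * j + 1 from rfl, tm_even, tm_odd]
    rintro ⟨h, -⟩
    simp at h
  · have e1 : m = 2 * j + 1 := by omega
    subst e1
    have e2 : 2 * j + 1 + 1 = 2 * (j + 1) := by ring
    have e3 : 2 * j + 1 + 2 = 2 * (j + 1) + 1 := by ring
    rw [e2, e3, tm_even, tm_odd (j + 1)]
    rintro ⟨-, h⟩
    simp at h

lemma not_const_TMK {x : ℕ → Bool} (hx : x ∈ TMK) (hc : ∀ n, x n = x 0) : False := by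
  obtain ⟨n, hn⟩ := factor_lemma hx 3
  apply tm_no_triple n
  have h0 := hn 0 (by norm_num)
  have h1 := hn 1 (by norm_num)
  have h2 := hn 2 (by norm_num)
  rw [hc 1] at h1
  rw [hc 2] at h2
  simp only [Nat.add_zero] at h0
  rw [← h0, ← h1, ← h2]
  exact ⟨rfl, rfl⟩

lemma TMK_isCompact : IsCompact TMK := by
  have : IsClosed TMK := isClosed_closure
  exact this.isCompact

lemma base_union : TMK = subH '' TMK ∪ shift '' (subH '' TMK) := by
  apply Set.Subset.antisymm
  · have hclosed : IsClosed (subH '' TMK ∪ shift '' (subH '' TMK)) :=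
      ((TMK_isCompact.image continuous_subH).union
        ((TMK_isCompact.image continuous_subH).image continuous_shift)).isClosed
    refine closure_minimal ?_ hclosed
    rintro _ ⟨n, rfl⟩
    rcases Nat.even_or_odd n with ⟨m, hm⟩ | ⟨m, hm⟩
    · left
      refine ⟨shift^[m] rho0, shift_iter_mem_TMK rho0_mem_TMK m, ?_⟩
      rw [subH_shift_iter, subH_rho0]
      congr 1; omega
    · right
      refine ⟨subH (shift^[m] rho0), ⟨_, shift_iter_mem_TMK rho0_mem_TMK m, rfl⟩, ?_⟩
      rw [subH_shift_iter, subH_rho0,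
        ← Function.iterate_succ_apply' shift (2 * m) rho0]
      congr 1; omega
  · rintro y (⟨u, hu, rfl⟩ | ⟨_, ⟨u, hu, rfl⟩, rfl⟩)
    · exact subH_mem_TMK hu
    · exact shift_mem_TMK (subH_mem_TMK hu)

lemma base_disj : Disjoint (subH '' TMK) (shift '' (subH '' TMK)) := by
  rw [Set.disjoint_left]
  rintro y ⟨u, hu, rfl⟩ ⟨_, ⟨v, hv, rfl⟩, hw⟩
  -- hw : shift (subH v) = subH u
  have key : ∀ m, u (m + 1) = u m := by
    intro m
    have h1 : subH u (2 * m + 1) = !u m := subH_odd u m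
    have h2 : subH u (2 * m + 1) = v (m + 1) := by
      rw [← hw]
      show subH v (2 * m + 1 + 1) = v (m + 1)
      rw [show 2 * m + 1 + 1 = 2 * (m + 1) by ring, subH_even]
    have h3 : subH u (2 * m + 2) = u (m + 1) := by
      rw [show 2 * m + 2 = 2 * (m + 1) by ring, subH_even]
    have h4 : subH u (2 * m + 2) = !v (m + 1) := by
      rw [← hw]
      show subH v (2 * m + 2 + 1) = !v (m + 1)
      rw [show 2 * m + 2 + 1 = 2 * (m + 1) + 1 by ring, subH_odd]
    rw [← h3, h4, ← h2, h1, Bool.not_not]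
  have hconst : ∀ n, u n = u 0 := by
    intro n
    induction n with
    | zero => rfl
    | succ m ih => rw [key m, ih]
  exact not_const_TMK hu hconst

lemma shift_img_add (a b : ℕ) (S : Set (ℕ → Bool)) :
    shift^[a] '' (shift^[b] '' S) = shift^[a + b] '' S := by
  rw [← Set.image_comp]
  apply Set.image_congr
  intro x _
  show shift^[a] (shift^[b] x) = shift^[a + b] x
  rw [← Function.iterate_add_apply]

lemma img_comm (k m : ℕ) (S : Set (ℕ → Bool)) :
    subH^[k] '' (shift^[m] '' S) = shift^[2 ^ k * m] '' (subH^[k] '' S) := by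
  rw [← Set.image_comp, ← Set.image_comp]
  apply Set.image_congr
  intro x _
  exact subHk_shift_iter k m x

lemma img_comm1 (q : ℕ) (S : Set (ℕ → Bool)) :
    shift^[2 * q] '' (subH '' S) = subH '' (shift^[q] '' S) := by
  have h := img_comm 1 q S
  simpa using h.symm

lemma decomp (k q r : ℕ) :
    shift^[2 * q + r] '' (subH^[k + 1] '' TMK) =
    shift^[r] '' (subH '' (shift^[q] '' (subH^[k] '' TMK))) := by
  rw [show (2 : ℕ) * q + r = r + 2 * q from by ring]
  rw [Function.iterate_succ', Set.image_comp, ← img_comm1, shift_img_add]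

lemma sub_TMK (q k : ℕ) : shift^[q] '' (subH^[k] '' TMK) ⊆ TMK := by
  rintro _ ⟨_, ⟨x, hx, rfl⟩, rfl⟩
  exact shift_iter_mem_TMK (subH_iter_mem_TMK hx k) q

lemma subH_inj : Function.Injective subH := by
  intro u v h
  funext m
  have := congrFun h (2 * m)
  rwa [subH_even, subH_even] at this

lemma shift_subH_inj : Function.Injective (shift ∘ subH) := by
  intro u v h
  funext m
  cases m with
  | zero =>
    have h0 := congrFun h 0
    have e : ∀ w : ℕ → Bool, (shift ∘ subH) w 0 = !w 0 := fun w => by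
      show subH w 1 = !w 0
      have := subH_odd w 0
      simpa using this
    rw [e, e] at h0
    exact Bool.not_inj h0
  | succ p =>
    have h0 := congrFun h (2 * p + 1)
    have e : ∀ w : ℕ → Bool, (shift ∘ subH) w (2 * p + 1) = w (p + 1) := fun w => by
      show subH w (2 * p + 1 + 1) = w (p + 1)
      rw [show 2 * p + 1 + 1 = 2 * (p + 1) by ring, subH_even]
    rw [e, e] at h0
    exact h0

lemma gen_union (k : ℕ) :
    TMK = ⋃ j ∈ Finset.range (2 ^ k), shift^[j] '' (subH^[k] '' TMK) := by
  induction k with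
  | zero => simp
  | succ k ih =>
    have hHk : subH^[k] '' TMK =
        subH^[k + 1] '' TMK ∪ shift^[2 ^ k] '' (subH^[k + 1] '' TMK) := by
      conv_lhs => rw [base_union]
      rw [Set.image_union]
      congr 1
      · rw [Function.iterate_succ, Set.image_comp]
      · rw [show shift '' (subH '' TMK) = shift^[1] '' (subH '' TMK) from by
          simp]
        rw [img_comm, mul_one, Function.iterate_succ, Set.image_comp]
    conv_lhs => rw [ih]
    ext y
    simp only [Set.mem_iUnion, Finset.mem_range]
    constructor
    · rintro ⟨j, hj, hy⟩
      rw [hHk, Set.image_union] at hy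
      rcases hy with h | h
      · exact ⟨j, by omega, h⟩
      · refine ⟨j + 2 ^ k, by rw [pow_succ]; omega, ?_⟩
        rwa [shift_img_add] at h
    · rintro ⟨j, hj, hy⟩
      by_cases h : j < 2 ^ k
      · exact ⟨j, h, by rw [hHk, Set.image_union]; exact Or.inl hy⟩
      · refine ⟨j - 2 ^ k, by rw [pow_succ] at hj; omega, ?_⟩
        rw [hHk, Set.image_union]
        right
        rw [shift_img_add]
        have e : j - 2 ^ k + 2 ^ k = j := by
          rw [pow_succ] at hj; omega
        rwa [e]

lemma disj_shift_subH {A B : Set (ℕ → Bool)} (h : Disjoint A B) :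
    Disjoint (shift '' (subH '' A)) (shift '' (subH '' B)) := by
  rw [Set.disjoint_left]
  rintro y ⟨_, ⟨a, ha, rfl⟩, rfl⟩ ⟨_, ⟨b, hb, rfl⟩, hba⟩
  have hab : b = a := shift_subH_inj hba
  subst hab
  exact Set.disjoint_left.mp h ha hb

lemma gen_disj (k : ℕ) (hk : 1 ≤ k) : ∀ i j, i < j → j < 2 ^ k →
    Disjoint (shift^[i] '' (subH^[k] '' TMK)) (shift^[j] '' (subH^[k] '' TMK)) := by
  induction k, hk using Nat.le_induction with
  | base =>
    intro i j hij hj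
    have : i = 0 ∧ j = 1 := by constructor <;> omega
    obtain ⟨rfl, rfl⟩ := this
    simpa using base_disj
  | succ k hk ih =>
    intro i j hij hj
    obtain ⟨qi, ri, hri, rfl⟩ : ∃ q r, r < 2 ∧ i = 2 * q + r :=
      ⟨i / 2, i % 2, by omega, by omega⟩
    obtain ⟨qj, rj, hrj, rfl⟩ : ∃ q r, r < 2 ∧ j = 2 * q + r :=
      ⟨j / 2, j % 2, by omega, by omega⟩
    rw [decomp, decomp]
    have hjk : qj < 2 ^ k := by rw [pow_succ] at hj; omega
    interval_cases ri <;> interval_cases rj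
    · -- both even
      have hq : qi < qj := by omega
      simp only [Function.iterate_zero, Set.image_id]
      exact (Set.disjoint_image_iff subH_inj).mpr (ih _ _ hq hjk)
    · -- i even, j odd
      simp only [Function.iterate_zero, Function.iterate_one, Set.image_id]
      exact base_disj.mono (Set.image_mono (sub_TMK _ _))
        (Set.image_mono (Set.image_mono (sub_TMK _ _)))
    · -- i odd, j even
      simp only [Function.iterate_zero, Function.iterate_one, Set.image_id]
      exact (base_disj.mono (Set.image_mono (sub_TMK _ _))
        (Set.image_mono (Set.image_mono (sub_TMK _ _)))).symm
    · -- both odd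
      have hq : qi < qj := by omega
      simp only [Function.iterate_one]
      exact disj_shift_subH (ih _ _ hq hjk)


/-- `𝕂 = ⊔_{j<2ᵏ} σʲ(Hᵏ(𝕂))` (disjointly) for every `k ≥ 1`;
in particular `𝕂 = H(𝕂) ⊔ σ(H(𝕂))`. -/
theorem stmt5 (k : ℕ) (hk : 1 ≤ k) :
    (TMK = ⋃ j ∈ Finset.range (2 ^ k), shift^[j] '' (subH^[k] '' TMK)) ∧
    (∀ i j, i < j → j < 2 ^ k →
      Disjoint (shift^[i] '' (subH^[k] '' TMK)) (shift^[j] '' (subH^[k] '' TMK))) ∧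
    TMK = subH '' TMK ∪ shift '' (subH '' TMK) ∧
    Disjoint (subH '' TMK) (shift '' (subH '' TMK)) :=
  ⟨gen_union k, gen_disj k hk, base_union, base_disj⟩
end
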